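/- Let L be a bounded modular lattice equipped with a complementation ' (i.e., x ⊔ x' = ⊤ and x ⊓ x' = ⊥ for all x). Define x ⊙ y := (x ⊔ y') ⊓ y and x → y := (x ⊓ y) ⊔ x'. Then for all x, y, z ∈ L: x ⊙ y ≤ z if and only if x ≤ y → z (left adjointness). -/
import Mathlib

/-- In a bounded modular lattice with a complementation `c`,
defining `x ⊙ y := (x ⊔ c y) ⊓ y` and `x → y := (x ⊓ y) ⊔ c x`, left
adjointness holds: `x ⊙ y ≤ z ↔ x ≤ y → z`. -/
theorem stmt_1 {L : Type*} [Lattice L] [BoundedOrder L] (c : L → L)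
    (hmod : ∀ x y z : L, x ≤ z → (x ⊔ y) ⊓ z = x ⊔ (y ⊓ z))
    (hsup : ∀ x : L, x ⊔ c x = ⊤) (hinf : ∀ x : L, x ⊓ c x = ⊥) :
    ∀ x y z : L, (x ⊔ c y) ⊓ y ≤ z ↔ x ≤ (y ⊓ z) ⊔ c y := by
  intro x y z
  constructor
  · intro h
    have hm : (c y ⊔ y) ⊓ (x ⊔ c y) = c y ⊔ (y ⊓ (x ⊔ c y)) :=
      hmod (c y) y (x ⊔ c y) le_sup_right
    have h1 : x ⊔ c y = c y ⊔ (y ⊓ (x ⊔ c y)) := by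
      rw [← hm, sup_comm (c y) y, hsup, top_inf_eq]
    have h2 : y ⊓ (x ⊔ c y) ≤ y ⊓ z := le_inf inf_le_left (by rw [inf_comm] at h; exact h)
    calc x ≤ x ⊔ c y := le_sup_left
      _ = c y ⊔ (y ⊓ (x ⊔ c y)) := h1
      _ ≤ c y ⊔ (y ⊓ z) := sup_le_sup_left h2 _
      _ = (y ⊓ z) ⊔ c y := sup_comm _ _
  · intro h
    have h1 : (x ⊔ c y) ⊓ y ≤ ((y ⊓ z) ⊔ c y) ⊓ y :=
      inf_le_inf_right _ (sup_le h le_sup_right)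
    have h2 : ((y ⊓ z) ⊔ c y) ⊓ y = (y ⊓ z) ⊔ (c y ⊓ y) :=
      hmod (y ⊓ z) (c y) y inf_le_left
    rw [h2, inf_comm (c y) y, hinf, sup_bot_eq] at h1
    exact h1.trans inf_le_right
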